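/- Let H_L^N be the random band matrix of size 2N+1 and band width 2L+1 with L = ⌊N^α⌋. Assume hypothesis [H2] with exponents μ and σ, and fix β with αμ < β < 1 and α < β. Then for every z ∈ ℂ with Im z > 0, lim_{N→∞} (2N+1)^{−1} E[ Im Tr (H_L^N − z)^{−1} − Σ_{p=1}^{N_β} Im Tr (H_L^{p,N} − z)^{−1} ] = 0, where H_L^{p,N}, p = 1, …, N_β, are the principal submatrices of H_L^N on the N_β consecutive blocks of size 2⌊N^β⌋+1. -/

import Mathlib

open MeasureTheory ProbabilityTheory Filter

noncomputable section

/-- The integer index in `[-N, N]` corresponding to `i : Fin (2N+1)`. -/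
def idx (N : ℕ) (i : Fin (2 * N + 1)) : ℤ := (i : ℤ) - (N : ℤ)

/-- The `(2N+1) × (2N+1)` random band matrix of band width `2L+1` built from entries `X`. -/
def bandMatrix (X : ℤ → ℤ → ℝ) (N L : ℕ) : Matrix (Fin (2 * N + 1)) (Fin (2 * N + 1)) ℝ :=
  Matrix.of fun i j =>
    if |idx N i - idx N j| ≤ (L : ℤ) then X (idx N i) (idx N j) / Real.sqrt (2 * L + 1) else 0

/-- The band half-width `L = ⌊N^α⌋`. -/
def bandL (α : ℝ) (N : ℕ) : ℕ := Nat.floor ((N : ℝ) ^ α)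

/-- The principal submatrix of `H` corresponding to the `p`-th consecutive block of size `B`
(blocks are numbered `p = 0, 1, …`; when `B` divides `2N+1` and `p < (2N+1)/B`, the `%` below
is the identity on the relevant indices and this is the honest principal submatrix). -/
def blockSub (N B p : ℕ) (H : Matrix (Fin (2 * N + 1)) (Fin (2 * N + 1)) ℝ) :
    Matrix (Fin B) (Fin B) ℝ :=
  Matrix.of fun q r =>
    H ⟨(p * B + (q : ℕ)) % (2 * N + 1), Nat.mod_lt _ (by omega)⟩
      ⟨(p * B + (r : ℕ)) % (2 * N + 1), Nat.mod_lt _ (by omega)⟩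

/-- `Im Tr (H - z)⁻¹` for a real matrix `H` and `z ∈ ℂ`. -/
def imTrResolvent {n : ℕ} (H : Matrix (Fin n) (Fin n) ℝ) (z : ℂ) : ℝ :=
  (Matrix.trace ((H.map (fun x : ℝ => (x : ℂ)) - z • (1 : Matrix (Fin n) (Fin n) ℂ))⁻¹)).im

end

noncomputable section
open Complex Matrix

def cNorm2 {m : ℕ} (v : Fin m → ℂ) : ℝ := ∑ i, Complex.normSq (v i)

lemma cNorm2_nonneg {m : ℕ} (v : Fin m → ℂ) : 0 ≤ cNorm2 v :=
  Finset.sum_nonneg fun i _ => Complex.normSq_nonneg _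

lemma herm_coercive {m : ℕ} (M : Matrix (Fin m) (Fin m) ℝ)
    (hM : ∀ i j, M i j = M j i) (z : ℂ) (hz : z.im ≠ 0) (w : Fin m → ℂ) :
    z.im ^ 2 * cNorm2 w ≤ cNorm2 ((M.map (fun x : ℝ => (x : ℂ)) - z • 1) *ᵥ w) := by
  set u := (M.map (fun x : ℝ => (x : ℂ)) - z • 1) *ᵥ w with hu0
  have hu : ∀ i, u i = (∑ j, (M i j : ℂ) * w j) - z * w i := by
    intro i
    simp [hu0, Matrix.sub_mulVec, Matrix.smul_mulVec, Matrix.one_mulVec,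
      Matrix.mulVec, dotProduct, Matrix.map_apply, Pi.smul_apply, smul_eq_mul]
  set Q := ∑ i, (starRingEnd ℂ) (w i) * u i with hQ0
  set R := ∑ i, ∑ j, (starRingEnd ℂ) (w i) * (M i j : ℂ) * w j with hR0
  have hQ : Q = R - z * (cNorm2 w : ℂ) := by
    rw [hQ0, hR0]
    have : ∀ i, (starRingEnd ℂ) (w i) * u i
        = (∑ j, (starRingEnd ℂ) (w i) * (M i j : ℂ) * w j)
          - z * ((starRingEnd ℂ) (w i) * w i) := by
      intro i
      rw [hu i, mul_sub, Finset.mul_sum]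
      congr 1
      · exact Finset.sum_congr rfl fun j _ => by ring
      · ring
    rw [Finset.sum_congr rfl fun i _ => this i, Finset.sum_sub_distrib, ← Finset.mul_sum]
    congr 1
    have : ∀ i, (starRingEnd ℂ) (w i) * w i = ((Complex.normSq (w i) : ℝ) : ℂ) := by
      intro i
      rw [mul_comm, Complex.mul_conj]
    rw [Finset.sum_congr rfl fun i _ => this i]
    push_cast [cNorm2]
    ring
  have hRim : R.im = 0 := by
    have hconj : (starRingEnd ℂ) R = R := by
      rw [hR0, map_sum (starRingEnd ℂ)]
      rw [Finset.sum_comm]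
      apply Finset.sum_congr rfl
      intro j _
      rw [map_sum (starRingEnd ℂ)]
      apply Finset.sum_congr rfl
      intro i _
      simp only [RingHom.map_mul, Complex.conj_conj, Complex.conj_ofReal]
      rw [hM i j]
      ring
    exact Complex.conj_eq_iff_im.mp hconj
  have hQim : Q.im = - (z.im * cNorm2 w) := by
    rw [hQ]
    simp [Complex.sub_im, hRim, Complex.mul_im]
  have habs : ‖Q‖ ≤ ∑ i, ‖w i‖ * ‖u i‖ := by
    refine le_trans (norm_sum_le _ _) ?_
    apply le_of_eq
    apply Finset.sum_congr rfl
    intro i _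
    rw [norm_mul, Complex.norm_conj]
  have hCS : (∑ i, ‖w i‖ * ‖u i‖) ^ 2 ≤ cNorm2 w * cNorm2 u := by
    have := Finset.sum_mul_sq_le_sq_mul_sq Finset.univ
      (fun i => ‖w i‖) (fun i => ‖u i‖)
    simpa [cNorm2, Complex.sq_norm] using this
  have h1 : (z.im * cNorm2 w) ^ 2 ≤ cNorm2 w * cNorm2 u := by
    calc (z.im * cNorm2 w) ^ 2 = Q.im ^ 2 := by rw [hQim]; ring
    _ ≤ (‖Q‖) ^ 2 := by
        have := Complex.abs_im_le_norm Q
        nlinarith [norm_nonneg Q, abs_nonneg Q.im, neg_abs_le Q.im, le_abs_self Q.im]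
    _ ≤ (∑ i, ‖w i‖ * ‖u i‖) ^ 2 := by
        have hsum : 0 ≤ ∑ i, ‖w i‖ * ‖u i‖ :=
          Finset.sum_nonneg fun i _ => mul_nonneg (norm_nonneg _) (norm_nonneg _)
        nlinarith [norm_nonneg Q]
    _ ≤ cNorm2 w * cNorm2 u := hCS
  rcases eq_or_lt_of_le (cNorm2_nonneg w) with h0 | h0
  · rw [← h0]
    simpa using cNorm2_nonneg u
  · nlinarith [cNorm2_nonneg u, sq_nonneg z.im]

lemma cNorm2_pos {m : ℕ} {v : Fin m → ℂ} (hv : v ≠ 0) : 0 < cNorm2 v := by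
  rcases eq_or_lt_of_le (cNorm2_nonneg v) with h0 | h0
  · exfalso
    apply hv
    funext i
    have := (Finset.sum_eq_zero_iff_of_nonneg
      (fun i _ => Complex.normSq_nonneg (v i))).mp h0.symm i (Finset.mem_univ i)
    simpa [Complex.normSq_eq_zero] using this
  · exact h0

lemma resolvent_isUnit {m : ℕ} (M : Matrix (Fin m) (Fin m) ℝ)
    (hM : ∀ i j, M i j = M j i) (z : ℂ) (hz : z.im ≠ 0) :
    IsUnit (M.map (fun x : ℝ => (x : ℂ)) - z • 1).det := by
  rw [isUnit_iff_ne_zero]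
  intro hdet
  obtain ⟨v, hv, hv0⟩ := (Matrix.exists_mulVec_eq_zero_iff).mpr hdet
  have h := herm_coercive M hM z hz v
  rw [hv0] at h
  have hz2 : 0 < z.im ^ 2 := by positivity
  have : cNorm2 (0 : Fin m → ℂ) = 0 := by simp [cNorm2]
  rw [this] at h
  nlinarith [cNorm2_pos hv]

lemma resolvent_inv_bound {m : ℕ} (M : Matrix (Fin m) (Fin m) ℝ)
    (hM : ∀ i j, M i j = M j i) (z : ℂ) (hz : z.im ≠ 0) (v : Fin m → ℂ) :
    cNorm2 ((M.map (fun x : ℝ => (x : ℂ)) - z • 1)⁻¹ *ᵥ v) ≤ (z.im ^ 2)⁻¹ * cNorm2 v := by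
  set A := M.map (fun x : ℝ => (x : ℂ)) - z • 1 with hA
  have hu : IsUnit A.det := resolvent_isUnit M hM z hz
  have hAv : A *ᵥ (A⁻¹ *ᵥ v) = v := by
    rw [Matrix.mulVec_mulVec, Matrix.mul_nonsing_inv _ hu, Matrix.one_mulVec]
  have h := herm_coercive M hM z hz (A⁻¹ *ᵥ v)
  rw [← hA, hAv] at h
  have hz2 : 0 < z.im ^ 2 := by positivity
  rw [← le_div_iff₀' hz2] at h
  rw [div_eq_inv_mul] at h
  exact h

lemma cNorm2_single {m : ℕ} (j : Fin m) : cNorm2 (Pi.single j (1 : ℂ)) = 1 := by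
  simp only [cNorm2, Pi.single_apply]
  rw [Finset.sum_eq_single j] <;> simp +contextual

lemma frob_prod_bound {m : ℕ} (F G : Matrix (Fin m) (Fin m) ℂ) (a b : ℝ)
    (ha : 0 ≤ a) (hF : ∀ v, cNorm2 (F *ᵥ v) ≤ a * cNorm2 v)
    (hG : ∀ v, cNorm2 (G *ᵥ v) ≤ b * cNorm2 v) :
    ∑ i, ∑ j, Complex.normSq ((F * G) i j) ≤ m * (a * b) := by
  have hcol : ∀ j : Fin m, ∑ i, Complex.normSq ((F * G) i j) ≤ a * b := by
    intro j
    have h1 : (F * G) *ᵥ Pi.single j (1 : ℂ) = fun i => (F * G) i j := by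
      funext i
      rw [Matrix.mulVec_single]
      simp
    have h2 : cNorm2 ((F * G) *ᵥ Pi.single j (1 : ℂ)) ≤ a * b := by
      rw [← Matrix.mulVec_mulVec]
      calc cNorm2 (F *ᵥ (G *ᵥ Pi.single j (1:ℂ))) ≤ a * cNorm2 (G *ᵥ Pi.single j (1:ℂ)) :=
            hF _
        _ ≤ a * (b * cNorm2 (Pi.single j (1:ℂ))) := by
            exact mul_le_mul_of_nonneg_left (hG _) ha
        _ = a * b := by rw [cNorm2_single]; ring
    rw [h1] at h2
    exact h2
  calc ∑ i, ∑ j, Complex.normSq ((F * G) i j)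
      = ∑ j, ∑ i, Complex.normSq ((F * G) i j) := Finset.sum_comm
    _ ≤ ∑ _j : Fin m, (a * b) := Finset.sum_le_sum fun j _ => hcol j
    _ = m * (a * b) := by simp [Finset.sum_const]

lemma trace_prod_abs_le {m : ℕ} (E F : Matrix (Fin m) (Fin m) ℂ) :
    ‖Matrix.trace (E * F)‖ ≤
      Real.sqrt (∑ i, ∑ j, Complex.normSq (E i j)) *
        Real.sqrt (∑ i, ∑ j, Complex.normSq (F i j)) := by
  set x := ∑ i, ∑ j, ‖E i j‖ * ‖F j i‖ with hx
  have hx0 : 0 ≤ x :=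
    Finset.sum_nonneg fun i _ => Finset.sum_nonneg fun j _ =>
      mul_nonneg (norm_nonneg _) (norm_nonneg _)
  have h1 : ‖Matrix.trace (E * F)‖ ≤ x := by
    rw [Matrix.trace]
    refine le_trans (norm_sum_le _ _) ?_
    rw [hx]
    refine Finset.sum_le_sum fun i _ => ?_
    rw [Matrix.diag_apply, Matrix.mul_apply]
    refine le_trans (norm_sum_le _ _) ?_
    exact le_of_eq (Finset.sum_congr rfl fun j _ => norm_mul _ _)
  have h2 : x ^ 2 ≤ (∑ i, ∑ j, Complex.normSq (E i j)) * (∑ i, ∑ j, Complex.normSq (F i j)) := by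
    have hprod : x = ∑ p : Fin m × Fin m, ‖E p.1 p.2‖ * ‖F p.2 p.1‖ := by
      rw [hx, Fintype.sum_prod_type]
    rw [hprod]
    have := Finset.sum_mul_sq_le_sq_mul_sq Finset.univ
      (fun p : Fin m × Fin m => ‖E p.1 p.2‖)
      (fun p : Fin m × Fin m => ‖F p.2 p.1‖)
    calc (∑ p : Fin m × Fin m, ‖E p.1 p.2‖ * ‖F p.2 p.1‖) ^ 2
        ≤ (∑ p : Fin m × Fin m, ‖E p.1 p.2‖ ^ 2) *
            ∑ p : Fin m × Fin m, ‖F p.2 p.1‖ ^ 2 := this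
      _ = (∑ i, ∑ j, Complex.normSq (E i j)) * (∑ i, ∑ j, Complex.normSq (F i j)) := by
          congr 1
          · rw [Fintype.sum_prod_type]
            exact Finset.sum_congr rfl fun i _ => Finset.sum_congr rfl fun j _ =>
              Complex.sq_norm _
          · rw [Fintype.sum_prod_type]
            rw [Finset.sum_comm]
            exact Finset.sum_congr rfl fun i _ => Finset.sum_congr rfl fun j _ =>
              Complex.sq_norm _
  calc ‖Matrix.trace (E * F)‖ ≤ x := h1
    _ = Real.sqrt (x ^ 2) := by rw [Real.sqrt_sq hx0]
    _ ≤ Real.sqrt ((∑ i, ∑ j, Complex.normSq (E i j)) * (∑ i, ∑ j, Complex.normSq (F i j))) :=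
        Real.sqrt_le_sqrt h2
    _ = _ := Real.sqrt_mul (Finset.sum_nonneg fun i _ => Finset.sum_nonneg fun j _ =>
          Complex.normSq_nonneg _) _

lemma imTr_resolvent_diff {m : ℕ} (M D : Matrix (Fin m) (Fin m) ℝ)
    (hM : ∀ i j, M i j = M j i) (hD : ∀ i j, D i j = D j i) (z : ℂ) (hz : z.im ≠ 0) :
    |imTrResolvent M z - imTrResolvent D z| ≤
      Real.sqrt m * (z.im ^ 2)⁻¹ * Real.sqrt (∑ i, ∑ j, (D i j - M i j) ^ 2) := by
  set A := M.map (fun x : ℝ => (x : ℂ)) - z • 1 with hA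
  set B := D.map (fun x : ℝ => (x : ℂ)) - z • 1 with hB
  have huA : IsUnit A.det := resolvent_isUnit M hM z hz
  have huB : IsUnit B.det := resolvent_isUnit D hD z hz
  have hresid : A⁻¹ - B⁻¹ = A⁻¹ * (B - A) * B⁻¹ := by
    have h1 : A⁻¹ * B * B⁻¹ = A⁻¹ := by
      rw [Matrix.mul_assoc, Matrix.mul_nonsing_inv _ huB, Matrix.mul_one]
    have h2 : A⁻¹ * A * B⁻¹ = B⁻¹ := by
      rw [Matrix.nonsing_inv_mul _ huA, Matrix.one_mul]
    rw [Matrix.mul_sub, Matrix.sub_mul, h1, h2]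
  have htr : Matrix.trace A⁻¹ - Matrix.trace B⁻¹ = Matrix.trace ((B - A) * (B⁻¹ * A⁻¹)) := by
    rw [← Matrix.trace_sub, hresid, Matrix.trace_mul_cycle A⁻¹ (B - A) B⁻¹,
      Matrix.trace_mul_comm]
  have hEnorm : ∑ i, ∑ j, Complex.normSq ((B - A) i j) = ∑ i, ∑ j, (D i j - M i j) ^ 2 := by
    refine Finset.sum_congr rfl fun i _ => Finset.sum_congr rfl fun j _ => ?_
    have : (B - A) i j = ((D i j - M i j : ℝ) : ℂ) := by
      rw [hA, hB]
      simp [Matrix.sub_apply, Matrix.map_apply]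
    rw [this, Complex.normSq_ofReal, sq]
  have hFnorm : ∑ i, ∑ j, Complex.normSq ((B⁻¹ * A⁻¹) i j) ≤ m * ((z.im ^ 2)⁻¹ * (z.im ^ 2)⁻¹) :=
    frob_prod_bound B⁻¹ A⁻¹ ((z.im ^ 2)⁻¹) ((z.im ^ 2)⁻¹) (by positivity)
      (fun v => resolvent_inv_bound D hD z hz v) (fun v => resolvent_inv_bound M hM z hz v)
  have hmain : |imTrResolvent M z - imTrResolvent D z| ≤
      ‖Matrix.trace A⁻¹ - Matrix.trace B⁻¹‖ := by
    rw [imTrResolvent, imTrResolvent, ← hA, ← hB, ← Complex.sub_im]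
    exact Complex.abs_im_le_norm _
  calc |imTrResolvent M z - imTrResolvent D z|
      ≤ ‖Matrix.trace ((B - A) * (B⁻¹ * A⁻¹))‖ := by rw [← htr]; exact hmain
    _ ≤ Real.sqrt (∑ i, ∑ j, Complex.normSq ((B - A) i j)) *
          Real.sqrt (∑ i, ∑ j, Complex.normSq ((B⁻¹ * A⁻¹) i j)) := trace_prod_abs_le _ _
    _ ≤ Real.sqrt (∑ i, ∑ j, (D i j - M i j) ^ 2) * Real.sqrt (m * ((z.im ^ 2)⁻¹ * (z.im ^ 2)⁻¹)) := by
        rw [hEnorm]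
        exact mul_le_mul_of_nonneg_left (Real.sqrt_le_sqrt hFnorm) (Real.sqrt_nonneg _)
    _ = Real.sqrt m * (z.im ^ 2)⁻¹ * Real.sqrt (∑ i, ∑ j, (D i j - M i j) ^ 2) := by
        rw [Real.sqrt_mul (Nat.cast_nonneg m),
          Real.sqrt_mul_self (by positivity : (0:ℝ) ≤ (z.im ^ 2)⁻¹)]
        ring

def be (B K n : ℕ) (hB : 0 < B) (h : B * K = n) : Fin B × Fin K ≃ Fin n where
  toFun x := ⟨x.2.val * B + x.1.val, by
    have h1 : x.2.val * B + x.1.val < (x.2.val + 1) * B := by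
      rw [add_mul, one_mul]
      exact Nat.add_lt_add_left x.1.isLt _
    have h2 : (x.2.val + 1) * B ≤ K * B := Nat.mul_le_mul_right B x.2.isLt
    have h3 : K * B = n := by rw [Nat.mul_comm]; exact h
    omega⟩
  invFun i := (⟨i.val % B, Nat.mod_lt _ hB⟩, ⟨i.val / B, by
    rw [Nat.div_lt_iff_lt_mul hB]
    have h3 : K * B = n := by rw [Nat.mul_comm]; exact h
    have := i.isLt
    omega⟩)
  left_inv x := by
    ext
    · show (x.2.val * B + x.1.val) % B = x.1.val
      rw [Nat.mul_comm x.2.val B, Nat.mul_add_mod, Nat.mod_eq_of_lt x.1.isLt]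
    · show (x.2.val * B + x.1.val) / B = x.2.val
      rw [Nat.mul_comm x.2.val B, Nat.mul_add_div hB, Nat.div_eq_of_lt x.1.isLt, Nat.add_zero]
  right_inv i := by
    ext
    show i.val / B * B + i.val % B = i.val
    have h4 := Nat.div_add_mod' i.val B
    omega

lemma block_trace (N Bs : ℕ) (hB : 0 < Bs) (hdvd : Bs ∣ (2 * N + 1))
    (M : Matrix (Fin (2 * N + 1)) (Fin (2 * N + 1)) ℝ)
    (hM : ∀ i j, M i j = M j i) (z : ℂ) (hz : z.im ≠ 0) :
    ∑ p ∈ Finset.range ((2 * N + 1) / Bs), imTrResolvent (blockSub N Bs p M) z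
      = imTrResolvent
          (Matrix.of fun i j : Fin (2 * N + 1) =>
            if (i : ℕ) / Bs = (j : ℕ) / Bs then M i j else 0) z := by
  have hKB : Bs * ((2 * N + 1) / Bs) = 2 * N + 1 := Nat.mul_div_cancel' hdvd
  set K := (2 * N + 1) / Bs with hK
  set e := be Bs K (2 * N + 1) hB hKB with he
  set Mb : Fin K → Matrix (Fin Bs) (Fin Bs) ℝ :=
    fun p => Matrix.of fun q r => M (e (q, p)) (e (r, p)) with hMb
  -- step 1 : blocks agree
  have hblock : ∀ p : Fin K, blockSub N Bs p.val M = Mb p := by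
    intro p
    ext q r
    show M _ _ = M (e (q, p)) (e (r, p))
    have hq : (p.val * Bs + q.val) % (2 * N + 1) = p.val * Bs + q.val :=
      Nat.mod_eq_of_lt (e (q, p)).isLt
    have hr : (p.val * Bs + r.val) % (2 * N + 1) = p.val * Bs + r.val :=
      Nat.mod_eq_of_lt (e (r, p)).isLt
    congr 1
    · refine Fin.ext ?_
      show (↑p * Bs + ↑q) % (2 * N + 1) = ((e (q, p) : Fin (2 * N + 1)) : ℕ)
      rw [hq]; rfl
    · refine Fin.ext ?_
      show (↑p * Bs + ↑r) % (2 * N + 1) = ((e (r, p) : Fin (2 * N + 1)) : ℕ)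
      rw [hr]; rfl
  -- step 2 : D as reindexed block diagonal
  set D : Matrix (Fin (2 * N + 1)) (Fin (2 * N + 1)) ℝ :=
    Matrix.of fun i j : Fin (2 * N + 1) =>
      if (i : ℕ) / Bs = (j : ℕ) / Bs then M i j else 0 with hD
  have hstep2 : D = Matrix.reindex e e (Matrix.blockDiagonal Mb) := by
    ext i j
    rw [Matrix.reindex_apply, Matrix.submatrix_apply, Matrix.blockDiagonal_apply]
    have h1 : (e.symm i).2.val = (i : ℕ) / Bs := rfl
    have h2 : (e.symm j).2.val = (j : ℕ) / Bs := rfl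
    by_cases hij : (i : ℕ) / Bs = (j : ℕ) / Bs
    · have hfin : (e.symm i).2 = (e.symm j).2 := Fin.ext (by rw [h1, h2, hij])
      rw [if_pos hfin, hMb]
      simp only [Matrix.of_apply]
      have h3 : e ((e.symm i).1, (e.symm i).2) = i := by
        rw [Prod.mk.eta]; exact e.apply_symm_apply i
      have h4 : e ((e.symm j).1, (e.symm i).2) = j := by
        rw [hfin, Prod.mk.eta]; exact e.apply_symm_apply j
      rw [h3, h4, hD]
      simp [hij]
    · have hfin : (e.symm i).2 ≠ (e.symm j).2 := by
        intro hcon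
        exact hij (by rw [← h1, ← h2, hcon])
      rw [if_neg hfin, hD]
      simp [hij]
  -- resolvents of the blocks
  set A : Fin K → Matrix (Fin Bs) (Fin Bs) ℂ :=
    fun p => (Mb p).map (fun x : ℝ => (x : ℂ)) - z • 1 with hA
  have hMbsym : ∀ p : Fin K, ∀ q r, Mb p q r = Mb p r q := by
    intro p q r
    rw [hMb]
    simp only [Matrix.of_apply]
    exact hM _ _
  have hAunit : ∀ p, IsUnit (A p).det := fun p => resolvent_isUnit (Mb p) (hMbsym p) z hz
  -- step 3 : resolvent of D
  have hstep3 : (D.map (fun x : ℝ => (x : ℂ)) - z • 1)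
      = Matrix.reindex e e (Matrix.blockDiagonal A) := by
    rw [hstep2, hA]
    have hbd : Matrix.blockDiagonal (fun p => (Mb p).map (fun x : ℝ => (x : ℂ)) - z • 1)
        = (Matrix.blockDiagonal Mb).map (fun x : ℝ => (x : ℂ)) - z • 1 := by
      have harg : (fun p => (Mb p).map (fun x : ℝ => (x : ℂ)) - z • 1)
          = (fun p => (Mb p).map (fun x : ℝ => (x : ℂ)))
            - z • (fun _ : Fin K => (1 : Matrix (Fin Bs) (Fin Bs) ℂ)) := rfl
      have hone : Matrix.blockDiagonal (fun _ : Fin K => (1 : Matrix (Fin Bs) (Fin Bs) ℂ)) = 1 :=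
        Matrix.blockDiagonal_one
      rw [harg, Matrix.blockDiagonal_sub, Matrix.blockDiagonal_smul, hone,
        ← Matrix.blockDiagonal_map Mb _ (by simp)]
    rw [hbd]
    simp only [Matrix.reindex_apply, Matrix.submatrix_sub, Pi.sub_apply,
      Matrix.submatrix_smul, Pi.smul_apply, Matrix.submatrix_map,
      Matrix.submatrix_one_equiv]
  have hblockinv : (Matrix.blockDiagonal A)⁻¹ = Matrix.blockDiagonal (fun p => (A p)⁻¹) := by
    apply Matrix.inv_eq_right_inv
    rw [← Matrix.blockDiagonal_mul]
    have hone : (fun p => A p * (A p)⁻¹) = fun _ => (1 : Matrix (Fin Bs) (Fin Bs) ℂ) := by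
      funext p
      exact Matrix.mul_nonsing_inv _ (hAunit p)
    rw [hone]
    exact Matrix.blockDiagonal_one
  have htrace : Matrix.trace ((D.map (fun x : ℝ => (x : ℂ)) - z • 1)⁻¹)
      = ∑ p : Fin K, Matrix.trace ((A p)⁻¹) := by
    rw [hstep3, Matrix.inv_reindex, hblockinv]
    have hre : Matrix.trace (Matrix.reindex e e (Matrix.blockDiagonal fun p => (A p)⁻¹))
        = Matrix.trace (Matrix.blockDiagonal fun p => (A p)⁻¹) := by
      rw [Matrix.reindex_apply, Matrix.trace, Matrix.trace]
      exact Equiv.sum_comp e.symm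
        (fun x => (Matrix.blockDiagonal fun p => (A p)⁻¹) x x)
    rw [hre, Matrix.trace_blockDiagonal]
  -- assemble
  have hsum : ∑ p ∈ Finset.range K, imTrResolvent (blockSub N Bs p M) z
      = ∑ p : Fin K, imTrResolvent (Mb p) z := by
    rw [← Fin.sum_univ_eq_sum_range]
    exact Finset.sum_congr rfl fun p _ => by rw [hblock p]
  rw [hsum]
  show _ = imTrResolvent D z
  rw [imTrResolvent]
  rw [htrace, Complex.im_sum]
  exact Finset.sum_congr rfl fun p _ => rfl

lemma det_key (N Bs : ℕ) (hB : 0 < Bs) (hdvd : Bs ∣ (2 * N + 1))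
    (M : Matrix (Fin (2 * N + 1)) (Fin (2 * N + 1)) ℝ)
    (hM : ∀ i j, M i j = M j i) (z : ℂ) (hz : z.im ≠ 0) :
    |imTrResolvent M z
        - ∑ p ∈ Finset.range ((2 * N + 1) / Bs), imTrResolvent (blockSub N Bs p M) z|
      ≤ Real.sqrt (2 * (N : ℝ) + 1) * (z.im ^ 2)⁻¹ *
          Real.sqrt (∑ i : Fin (2 * N + 1), ∑ j : Fin (2 * N + 1),
            (if (i : ℕ) / Bs = (j : ℕ) / Bs then 0 else (M i j) ^ 2)) := by
  set D : Matrix (Fin (2 * N + 1)) (Fin (2 * N + 1)) ℝ :=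
    Matrix.of fun i j : Fin (2 * N + 1) =>
      if (i : ℕ) / Bs = (j : ℕ) / Bs then M i j else 0 with hD
  have hDsym : ∀ i j, D i j = D j i := by
    intro i j
    rw [hD]
    simp only [Matrix.of_apply]
    by_cases h : (i : ℕ) / Bs = (j : ℕ) / Bs
    · rw [if_pos h, if_pos h.symm, hM]
    · rw [if_neg h, if_neg fun hc => h hc.symm]
  have hblocks := block_trace N Bs hB hdvd M hM z hz
  rw [hblocks]
  have hdiff := imTr_resolvent_diff M D hM hDsym z hz
  have hsq : ∑ i : Fin (2 * N + 1), ∑ j : Fin (2 * N + 1), (D i j - M i j) ^ 2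
      = ∑ i : Fin (2 * N + 1), ∑ j : Fin (2 * N + 1),
          (if (i : ℕ) / Bs = (j : ℕ) / Bs then 0 else (M i j) ^ 2) := by
    refine Finset.sum_congr rfl fun i _ => Finset.sum_congr rfl fun j _ => ?_
    rw [hD]
    simp only [Matrix.of_apply]
    by_cases h : (i : ℕ) / Bs = (j : ℕ) / Bs
    · rw [if_pos h, if_pos h]; ring
    · rw [if_neg h, if_neg h]; ring
  rw [hsq] at hdiff
  refine le_trans hdiff ?_
  have hcast : ((2 * N + 1 : ℕ) : ℝ) = 2 * (N : ℝ) + 1 := by push_cast; ring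
  rw [hcast]

lemma cross_bad (Bs L i j : ℕ) (hB : 0 < Bs) (hcross : i / Bs ≠ j / Bs)
    (h1 : i ≤ j + L) (h2 : j ≤ i + L) : i % Bs < L ∨ Bs - L ≤ i % Bs := by
  have hieq : Bs * (i / Bs) + i % Bs = i := Nat.div_add_mod i Bs
  have hjeq : Bs * (j / Bs) + j % Bs = j := Nat.div_add_mod j Bs
  have hsj : j % Bs < Bs := Nat.mod_lt j hB
  rcases Nat.lt_or_ge (i / Bs) (j / Bs) with h | h
  · right
    have hmul : Bs * (i / Bs + 1) ≤ Bs * (j / Bs) := Nat.mul_le_mul_left Bs h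
    rw [Nat.mul_succ] at hmul
    have hj' : Bs * (j / Bs) ≤ j := by
      conv_rhs => rw [← hjeq]
      exact Nat.le_add_right _ _
    have h6 : Bs * (i / Bs) + Bs ≤ j := le_trans hmul hj'
    have h7 : j ≤ Bs * (i / Bs) + (i % Bs + L) := by
      rw [← Nat.add_assoc, hieq]; exact h2
    have h8 : Bs ≤ i % Bs + L := Nat.le_of_add_le_add_left (le_trans h6 h7)
    omega
  · left
    have hlt : j / Bs < i / Bs := lt_of_le_of_ne h fun e => hcross e.symm
    have hjlt : j < Bs * (j / Bs + 1) := by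
      rw [Nat.mul_succ]
      omega
    have hmul : Bs * (j / Bs + 1) ≤ Bs * (i / Bs) := Nat.mul_le_mul_left Bs hlt
    have h6 : Bs * (i / Bs) + i % Bs ≤ j + L := by rw [hieq]; exact h1
    have h7 : j + L < Bs * (i / Bs) + L := Nat.add_lt_add_right (lt_of_lt_of_le hjlt hmul) L
    exact Nat.lt_of_add_lt_add_left (lt_of_le_of_lt h6 h7)

lemma badI_card (n Bs L K : ℕ) (hB : 0 < Bs) (hKB : Bs * K = n) :
    ((Finset.univ : Finset (Fin n)).filter
        (fun i : Fin n => (i : ℕ) % Bs < L ∨ Bs - L ≤ (i : ℕ) % Bs)).card ≤ K * (2 * L) := by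
  set badR := (Finset.range Bs).filter (fun r => r < L ∨ Bs - L ≤ r) with hbadR
  have hcardR : badR.card ≤ 2 * L := by
    have hsub : badR ⊆ (Finset.range Bs).filter (· < L) ∪
        (Finset.range Bs).filter (fun r => Bs - L ≤ r) := by
      intro x hx
      simp only [hbadR, Finset.mem_filter, Finset.mem_range] at hx
      rcases hx.2 with h | h
      · exact Finset.mem_union_left _ (Finset.mem_filter.mpr ⟨Finset.mem_range.mpr hx.1, h⟩)
      · exact Finset.mem_union_right _ (Finset.mem_filter.mpr ⟨Finset.mem_range.mpr hx.1, h⟩)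
    refine le_trans (Finset.card_le_card hsub) (le_trans (Finset.card_union_le _ _) ?_)
    have c1 : ((Finset.range Bs).filter (· < L)).card ≤ L := by
      have : (Finset.range Bs).filter (· < L) ⊆ Finset.range L := by
        intro x hx
        simp only [Finset.mem_filter, Finset.mem_range] at hx ⊢
        exact hx.2
      simpa using Finset.card_le_card this
    have c2 : ((Finset.range Bs).filter (fun r => Bs - L ≤ r)).card ≤ L := by
      have hsub2 : (Finset.range Bs).filter (fun r => Bs - L ≤ r) ⊆ Finset.Ico (Bs - L) Bs := by
        intro x hx
        simp only [Finset.mem_filter, Finset.mem_range] at hx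
        exact Finset.mem_Ico.mpr ⟨hx.2, hx.1⟩
      refine le_trans (Finset.card_le_card hsub2) ?_
      rw [Nat.card_Ico]
      omega
    omega
  have hinj : ∀ i ∈ (Finset.univ : Finset (Fin n)).filter
      (fun i : Fin n => (i : ℕ) % Bs < L ∨ Bs - L ≤ (i : ℕ) % Bs),
      (((i : ℕ) / Bs, (i : ℕ) % Bs)) ∈ (Finset.range K) ×ˢ badR := by
    intro i hi
    simp only [Finset.mem_filter, Finset.mem_univ, true_and] at hi
    refine Finset.mem_product.mpr ⟨Finset.mem_range.mpr ?_, ?_⟩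
    · rw [Nat.div_lt_iff_lt_mul hB]
      have h3 : K * Bs = n := by rw [Nat.mul_comm]; exact hKB
      have := i.isLt
      omega
    · exact Finset.mem_filter.mpr ⟨Finset.mem_range.mpr (Nat.mod_lt _ hB), hi⟩
  have := Finset.card_le_card_of_injOn
    (f := fun i : Fin n => ((i : ℕ) / Bs, (i : ℕ) % Bs)) hinj ?_
  · refine le_trans this ?_
    rw [Finset.card_product, Finset.card_range]
    exact Nat.mul_le_mul_left K hcardR
  · intro x _ y _ hxy
    have h1 : (x : ℕ) / Bs = (y : ℕ) / Bs := (Prod.mk.injEq _ _ _ _).mp hxy |>.1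
    have h2 : (x : ℕ) % Bs = (y : ℕ) % Bs := (Prod.mk.injEq _ _ _ _).mp hxy |>.2
    have hx := Nat.div_add_mod (x : ℕ) Bs
    have hy := Nat.div_add_mod (y : ℕ) Bs
    apply Fin.ext
    rw [← hx, ← hy, h1, h2]

lemma row_band_card (N L : ℕ) (i : Fin (2 * N + 1)) :
    ((Finset.univ : Finset (Fin (2 * N + 1))).filter
        (fun j => |idx N i - idx N j| ≤ (L : ℤ))).card ≤ 2 * L + 1 := by
  have hmem : ∀ j ∈ (Finset.univ : Finset (Fin (2 * N + 1))).filter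
      (fun j => |idx N i - idx N j| ≤ (L : ℤ)),
      idx N i - idx N j ∈ Finset.Icc (-(L : ℤ)) (L : ℤ) := by
    intro j hj
    simp only [Finset.mem_filter, Finset.mem_univ, true_and] at hj
    exact Finset.mem_Icc.mpr (abs_le.mp hj)
  have hcard := Finset.card_le_card_of_injOn (f := fun j => idx N i - idx N j) hmem ?_
  · refine le_trans hcard ?_
    rw [Int.card_Icc]
    omega
  · intro x _ y _ hxy
    simp only [idx] at hxy
    apply Fin.ext
    omega

open MeasureTheory in
lemma moment2 {Ω : Type*} [MeasurableSpace Ω] (P : Measure Ω) [IsProbabilityMeasure P]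
    (X : Ω → ℤ → ℤ → ℝ)
    (hsym : ∀ ω i j, X ω i j = X ω j i)
    (hmeas : ∀ i j, Measurable fun ω => X ω i j)
    (hident : ∀ i j : ℤ, i ≤ j → P.map (fun ω => X ω i j) = P.map (fun ω => X ω 0 0))
    (hvar : ∫ ω, (X ω 0 0) ^ 2 ∂P = 1)
    (hmom2 : Integrable (fun ω => |X ω 0 0| ^ 2) P) :
    ∀ i j : ℤ, Integrable (fun ω => (X ω i j) ^ 2) P ∧ ∫ ω, (X ω i j) ^ 2 ∂P = 1 := by
  have h00 : Integrable (fun ω => (X ω 0 0) ^ 2) P := by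
    simpa [sq_abs] using hmom2
  have hg : ∀ (μ : Measure ℝ), AEStronglyMeasurable (fun x : ℝ => x ^ 2) μ :=
    fun μ => (measurable_id.pow_const 2).aestronglyMeasurable
  have key : ∀ i j : ℤ, i ≤ j →
      Integrable (fun ω => (X ω i j) ^ 2) P ∧ ∫ ω, (X ω i j) ^ 2 ∂P = 1 := by
    intro i j hij
    have hmap := hident i j hij
    have hXm : AEMeasurable (fun ω => X ω i j) P := (hmeas i j).aemeasurable
    have hX0 : AEMeasurable (fun ω => X ω 0 0) P := (hmeas 0 0).aemeasurable
    have hint0 : Integrable (fun x : ℝ => x ^ 2) (P.map fun ω => X ω 0 0) :=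
      (integrable_map_measure (hg _) hX0).mpr h00
    have hintij : Integrable (fun x : ℝ => x ^ 2) (P.map fun ω => X ω i j) := by
      rw [hmap]; exact hint0
    constructor
    · exact (integrable_map_measure (hg _) hXm).mp hintij
    · have e1 : ∫ ω, (X ω i j) ^ 2 ∂P = ∫ x, x ^ 2 ∂(P.map fun ω => X ω i j) :=
        (integral_map hXm (hg _)).symm
      have e2 : ∫ x, x ^ 2 ∂(P.map fun ω => X ω 0 0) = ∫ ω, (X ω 0 0) ^ 2 ∂P :=
        integral_map hX0 (hg _)
      rw [e1, hmap, e2, hvar]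
  intro i j
  rcases le_total i j with hij | hji
  · exact key i j hij
  · have hfun : (fun ω => X ω i j) = fun ω => X ω j i := funext fun ω => hsym ω i j
    have := key j i hji
    constructor
    · have h := this.1
      rw [show (fun ω => (X ω i j)^2) = fun ω => (X ω j i)^2 by
        funext ω; rw [hsym ω i j]]
      exact h
    · have h := this.2
      rw [show (fun ω => (X ω i j)^2) = fun ω => (X ω j i)^2 by
        funext ω; rw [hsym ω i j]]
      exact h

open MeasureTheory in
lemma band_entry_int {Ω : Type*} [MeasurableSpace Ω] (P : Measure Ω) [IsProbabilityMeasure P]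
    (X : Ω → ℤ → ℤ → ℝ) (N L : ℕ)
    (hm2 : ∀ i j : ℤ, Integrable (fun ω => (X ω i j) ^ 2) P ∧ ∫ ω, (X ω i j) ^ 2 ∂P = 1)
    (i j : Fin (2 * N + 1)) :
    Integrable (fun ω => (bandMatrix (X ω) N L i j) ^ 2) P ∧
      ∫ ω, (bandMatrix (X ω) N L i j) ^ 2 ∂P
        ≤ (if |idx N i - idx N j| ≤ (L : ℤ) then (2 * (L : ℝ) + 1)⁻¹ else 0) := by
  have hL1 : (0 : ℝ) < 2 * (L : ℝ) + 1 := by positivity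
  by_cases hband : |idx N i - idx N j| ≤ (L : ℤ)
  · have hfun : (fun ω => (bandMatrix (X ω) N L i j) ^ 2)
        = fun ω => (X ω (idx N i) (idx N j)) ^ 2 / (2 * (L : ℝ) + 1) := by
      funext ω
      rw [bandMatrix, Matrix.of_apply, if_pos hband, div_pow,
        Real.sq_sqrt (by positivity : (0:ℝ) ≤ 2 * (L : ℝ) + 1)]
    rw [hfun, if_pos hband]
    constructor
    · exact (hm2 _ _).1.div_const _
    · rw [integral_div, (hm2 (idx N i) (idx N j)).2]
      rw [one_div]
  · have hfun : (fun ω => (bandMatrix (X ω) N L i j) ^ 2) = fun _ => (0 : ℝ) := by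
      funext ω
      rw [bandMatrix, Matrix.of_apply, if_neg hband]
      ring
    rw [hfun, if_neg hband]
    constructor
    · exact integrable_const 0
    · simp

lemma sqrt_amgm (t S : ℝ) (ht : 0 < t) (hS : 0 ≤ S) :
    Real.sqrt S ≤ (t ^ 2 + S) / (2 * t) := by
  rw [le_div_iff₀ (by positivity)]
  nlinarith [Real.sq_sqrt hS, Real.sqrt_nonneg S, sq_nonneg (Real.sqrt S - t)]

lemma inv_sqrt_mul (n m : ℝ) (hn : 0 < n) (hm : 0 ≤ m) :
    n⁻¹ * Real.sqrt n * Real.sqrt m = Real.sqrt (m / n) := by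
  rw [Real.sqrt_div hm n]
  have h1 : Real.sqrt n ≠ 0 := ne_of_gt (Real.sqrt_pos.mpr hn)
  rw [eq_div_iff h1]
  have h2 : Real.sqrt n * Real.sqrt n = n := Real.mul_self_sqrt (le_of_lt hn)
  calc n⁻¹ * Real.sqrt n * Real.sqrt m * Real.sqrt n
      = n⁻¹ * (Real.sqrt n * Real.sqrt n) * Real.sqrt m := by ring
    _ = n⁻¹ * n * Real.sqrt m := by rw [h2]
    _ = Real.sqrt m := by rw [inv_mul_cancel₀ (ne_of_gt hn), one_mul]

open MeasureTheory ProbabilityTheory Filter in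
theorem statement_11_aux
    {Ω : Type*} [MeasurableSpace Ω] (P : Measure Ω) [IsProbabilityMeasure P]
    (α β : ℝ) (hα0 : 0 ≤ α) (hαβ : α < β)
    (X : Ω → ℤ → ℤ → ℝ)
    (hsym : ∀ ω i j, X ω i j = X ω j i)
    (hmeas : ∀ i j, Measurable fun ω => X ω i j)
    (hident : ∀ i j : ℤ, i ≤ j → P.map (fun ω => X ω i j) = P.map (fun ω => X ω 0 0))
    (hvar : ∫ ω, (X ω 0 0) ^ 2 ∂P = 1)
    (hmom : ∀ k : ℕ, Integrable (fun ω => |X ω 0 0| ^ k) P)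
    (z : ℂ) (hz : 0 < z.im) :
    Tendsto
      (fun N : ℕ =>
        (2 * (N : ℝ) + 1)⁻¹ *
          ∫ ω, (imTrResolvent (bandMatrix (X ω) N (bandL α N)) z
            - ∑ p ∈ Finset.range ((2 * N + 1) / (2 * Nat.floor ((N : ℝ) ^ β) + 1)),
                imTrResolvent
                  (blockSub N (2 * Nat.floor ((N : ℝ) ^ β) + 1) p
                    (bandMatrix (X ω) N (bandL α N))) z) ∂P)
      (atTop ⊓ 𝓟 {N : ℕ | (2 * Nat.floor ((N : ℝ) ^ β) + 1) ∣ (2 * N + 1)})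
      (nhds 0) := by
  have hm2 := moment2 P X hsym hmeas hident hvar (hmom 2)
  have hzne : z.im ≠ 0 := ne_of_gt hz
  -- the bound sequence
  set b : ℕ → ℝ := fun N =>
    (z.im ^ 2)⁻¹ * Real.sqrt
      (((((2 * N + 1) / (2 * Nat.floor ((N : ℝ) ^ β) + 1)) * (2 * bandL α N) : ℕ) + 1 : ℝ)
        / (2 * (N : ℝ) + 1)) with hb
  apply squeeze_zero_norm'
  · -- eventual bound
    rw [Filter.eventually_inf_principal]
    filter_upwards [Filter.eventually_ge_atTop 1] with N hN1 hNdvd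
    set Bs := 2 * Nat.floor ((N : ℝ) ^ β) + 1 with hBs
    set L := bandL α N with hLdef
    set K := (2 * N + 1) / Bs with hKdef
    have hB : 0 < Bs := by omega
    have hdvd : Bs ∣ (2 * N + 1) := hNdvd
    set c : ℝ := Real.sqrt (2 * (N : ℝ) + 1) * (z.im ^ 2)⁻¹ with hc
    have hc0 : 0 ≤ c := by positivity
    set t : ℝ := Real.sqrt ((K * (2 * L) : ℕ) + 1) with ht
    have ht0 : 0 < t := Real.sqrt_pos.mpr (by positivity)
    have ht2 : t ^ 2 = ((K * (2 * L) : ℕ) : ℝ) + 1 := Real.sq_sqrt (by positivity)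
    -- per-pair terms
    set T : Fin (2 * N + 1) × Fin (2 * N + 1) → Ω → ℝ :=
      fun p ω => if (p.1 : ℕ) / Bs = (p.2 : ℕ) / Bs then 0
        else (bandMatrix (X ω) N L p.1 p.2) ^ 2 with hT
    set w : Fin (2 * N + 1) × Fin (2 * N + 1) → ℝ :=
      fun p => if (p.1 : ℕ) / Bs = (p.2 : ℕ) / Bs then 0
        else (if |idx N p.1 - idx N p.2| ≤ (L : ℤ) then (2 * (L : ℝ) + 1)⁻¹ else 0) with hw
    have hTint : ∀ p, Integrable (T p) P := by
      intro p
      rw [hT]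
      by_cases hcr : (p.1 : ℕ) / Bs = (p.2 : ℕ) / Bs
      · simp only [if_pos hcr]
        exact integrable_const 0
      · simp only [if_neg hcr]
        exact (band_entry_int P X N L hm2 p.1 p.2).1
    have hTbound : ∀ p, ∫ ω, T p ω ∂P ≤ w p := by
      intro p
      rw [hT, hw]
      by_cases hcr : (p.1 : ℕ) / Bs = (p.2 : ℕ) / Bs
      · simp only [if_pos hcr]
        simp
      · simp only [if_neg hcr]
        exact (band_entry_int P X N L hm2 p.1 p.2).2
    set Sf : Ω → ℝ := fun ω => ∑ p : Fin (2 * N + 1) × Fin (2 * N + 1), T p ω with hSf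
    have hSfnn : ∀ ω, 0 ≤ Sf ω := by
      intro ω
      refine Finset.sum_nonneg fun p _ => ?_
      rw [hT]
      by_cases hcr : (p.1 : ℕ) / Bs = (p.2 : ℕ) / Bs
      · simp [hcr]
      · simp only [if_neg hcr]
        positivity
    have hSfint : Integrable Sf P := integrable_finset_sum _ fun p _ => hTint p
    -- counting bound on ∫ Sf
    have hwrow : ∀ i : Fin (2 * N + 1),
        ∑ j : Fin (2 * N + 1), w (i, j) ≤
          (if (i : ℕ) % Bs < L ∨ Bs - L ≤ (i : ℕ) % Bs then (1 : ℝ) else 0) := by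
      intro i
      by_cases hbad : (i : ℕ) % Bs < L ∨ Bs - L ≤ (i : ℕ) % Bs
      · rw [if_pos hbad]
        have hle : ∀ j : Fin (2 * N + 1), w (i, j) ≤
            (if |idx N i - idx N j| ≤ (L : ℤ) then (2 * (L : ℝ) + 1)⁻¹ else 0) := by
          intro j
          rw [hw]
          by_cases hcr : (i : ℕ) / Bs = (j : ℕ) / Bs
          · simp only [if_pos hcr]
            by_cases hba : |idx N i - idx N j| ≤ (L : ℤ) <;> simp [hba] <;> positivity
          · simp only [if_neg hcr]
            exact le_rfl
        refine le_trans (Finset.sum_le_sum fun j _ => hle j) ?_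
        rw [Finset.sum_ite, Finset.sum_const, Finset.sum_const_zero, add_zero,
          nsmul_eq_mul]
        have hcard := row_band_card N L i
        calc (((Finset.univ : Finset (Fin (2 * N + 1))).filter
              (fun j => |idx N i - idx N j| ≤ (L : ℤ))).card : ℝ) * (2 * (L : ℝ) + 1)⁻¹
            ≤ (2 * (L : ℝ) + 1) * (2 * (L : ℝ) + 1)⁻¹ := by
              refine mul_le_mul_of_nonneg_right ?_ (by positivity)
              have : ((2 * L + 1 : ℕ) : ℝ) = 2 * (L : ℝ) + 1 := by push_cast; ring
              rw [← this]
              exact_mod_cast hcard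
          _ = 1 := mul_inv_cancel₀ (by positivity)
      · rw [if_neg hbad]
        have hzero : ∀ j : Fin (2 * N + 1), w (i, j) = 0 := by
          intro j
          rw [hw]
          by_cases hcr : (i : ℕ) / Bs = (j : ℕ) / Bs
          · simp [hcr]
          · simp only [if_neg hcr]
            by_cases hba : |idx N i - idx N j| ≤ (L : ℤ)
            · exfalso
              apply hbad
              have habs := abs_le.mp hba
              have h1 : (i : ℕ) ≤ (j : ℕ) + L := by
                simp only [idx] at habs
                omega
              have h2 : (j : ℕ) ≤ (i : ℕ) + L := by
                simp only [idx] at habs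
                omega
              exact cross_bad Bs L (i : ℕ) (j : ℕ) hB hcr h1 h2
            · simp [hba]
        rw [Finset.sum_congr rfl fun j _ => hzero j]
        simp
    have hSfint_bound : ∫ ω, Sf ω ∂P ≤ ((K * (2 * L) : ℕ) : ℝ) := by
      rw [hSf, integral_finset_sum _ fun p _ => hTint p]
      refine le_trans (Finset.sum_le_sum fun p _ => hTbound p) ?_
      rw [Fintype.sum_prod_type]
      refine le_trans (Finset.sum_le_sum fun i _ => hwrow i) ?_
      rw [Finset.sum_ite, Finset.sum_const, Finset.sum_const_zero, add_zero, nsmul_eq_mul,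
        mul_one]
      have hbadcard := badI_card (2 * N + 1) Bs L K hB (Nat.mul_div_cancel' hdvd)
      exact_mod_cast hbadcard
    -- pointwise deterministic bound
    have hptw : ∀ ω,
        |imTrResolvent (bandMatrix (X ω) N L) z
            - ∑ p ∈ Finset.range ((2 * N + 1) / Bs),
                imTrResolvent (blockSub N Bs p (bandMatrix (X ω) N L)) z|
          ≤ c * Real.sqrt (Sf ω) := by
      intro ω
      have hsymband : ∀ i j, bandMatrix (X ω) N L i j = bandMatrix (X ω) N L j i := by
        intro i j
        have hc1 : |idx N j - idx N i| = |idx N i - idx N j| := abs_sub_comm _ _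
        simp only [bandMatrix, Matrix.of_apply, hc1]
        by_cases hba : |idx N i - idx N j| ≤ (L : ℤ)
        · simp [hba, hsym ω (idx N i) (idx N j)]
        · simp [hba]
      have hdk := det_key N Bs hB hdvd (bandMatrix (X ω) N L) hsymband z hzne
      have hSfω : Sf ω = ∑ i : Fin (2 * N + 1), ∑ j : Fin (2 * N + 1),
          (if (i : ℕ) / Bs = (j : ℕ) / Bs then 0 else (bandMatrix (X ω) N L i j) ^ 2) := by
        rw [hSf]
        exact Fintype.sum_prod_type _
      rw [← hSfω] at hdk
      exact hdk
    -- integral chain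
    set F : Ω → ℝ := fun ω =>
      imTrResolvent (bandMatrix (X ω) N L) z
        - ∑ p ∈ Finset.range ((2 * N + 1) / Bs),
            imTrResolvent (blockSub N Bs p (bandMatrix (X ω) N L)) z with hF
    have hdom : ∀ ω, |F ω| ≤ c / (2 * t) * (t ^ 2 + Sf ω) := by
      intro ω
      refine le_trans (hptw ω) ?_
      have := sqrt_amgm t (Sf ω) ht0 (hSfnn ω)
      calc c * Real.sqrt (Sf ω) ≤ c * ((t ^ 2 + Sf ω) / (2 * t)) :=
            mul_le_mul_of_nonneg_left this hc0
        _ = c / (2 * t) * (t ^ 2 + Sf ω) := by ring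
    have hgint : Integrable (fun ω => c / (2 * t) * (t ^ 2 + Sf ω)) P :=
      (((integrable_const (t ^ 2)).add hSfint).const_mul _)
    have hFbound : |∫ ω, F ω ∂P| ≤ c * t := by
      have h1 : |∫ ω, F ω ∂P| ≤ ∫ ω, |F ω| ∂P := by
        have := norm_integral_le_integral_norm (μ := P) F
        simpa [Real.norm_eq_abs] using this
      have h2 : ∫ ω, |F ω| ∂P ≤ ∫ ω, c / (2 * t) * (t ^ 2 + Sf ω) ∂P :=
        integral_mono_of_nonneg (Filter.Eventually.of_forall fun ω => abs_nonneg _)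
          hgint (Filter.Eventually.of_forall hdom)
      have h3 : ∫ ω, c / (2 * t) * (t ^ 2 + Sf ω) ∂P
          = c / (2 * t) * (t ^ 2 + ∫ ω, Sf ω ∂P) := by
        rw [integral_const_mul, integral_add (integrable_const _) hSfint, integral_const]
        simp
      have h4 : c / (2 * t) * (t ^ 2 + ∫ ω, Sf ω ∂P) ≤ c / (2 * t) * (t ^ 2 + t ^ 2) := by
        refine mul_le_mul_of_nonneg_left ?_ (by positivity)
        have : ((K * (2 * L) : ℕ) : ℝ) ≤ t ^ 2 := by rw [ht2]; linarith
        linarith [hSfint_bound]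
      have h5 : c / (2 * t) * (t ^ 2 + t ^ 2) = c * t := by
        field_simp
        ring
      linarith [le_trans h1 (le_trans h2 (le_trans (le_of_eq h3) (le_trans h4 (le_of_eq h5))))]
    -- combine with the normalization
    have hnpos : (0 : ℝ) < 2 * (N : ℝ) + 1 := by positivity
    have hfinal : ‖(2 * (N : ℝ) + 1)⁻¹ * ∫ ω, F ω ∂P‖ ≤ b N := by
      rw [Real.norm_eq_abs, abs_mul, abs_of_pos (inv_pos.mpr hnpos)]
      have h6 : (2 * (N : ℝ) + 1)⁻¹ * |∫ ω, F ω ∂P| ≤ (2 * (N : ℝ) + 1)⁻¹ * (c * t) :=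
        mul_le_mul_of_nonneg_left hFbound (le_of_lt (inv_pos.mpr hnpos))
      refine le_trans h6 (le_of_eq ?_)
      rw [hb, hc, ht]
      have : (2 * (N : ℝ) + 1)⁻¹ * (Real.sqrt (2 * (N : ℝ) + 1) * (z.im ^ 2)⁻¹ *
          Real.sqrt (((K * (2 * L) : ℕ) : ℝ) + 1))
          = (z.im ^ 2)⁻¹ * ((2 * (N : ℝ) + 1)⁻¹ * Real.sqrt (2 * (N : ℝ) + 1) *
              Real.sqrt (((K * (2 * L) : ℕ) : ℝ) + 1)) := by ring
      rw [this, inv_sqrt_mul _ _ hnpos (by positivity)]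
    exact hfinal
  · -- the bound tends to zero
    have hβ0 : 0 < β := lt_of_le_of_lt hα0 hαβ
    have hu : Tendsto (fun N : ℕ =>
        ((((2 * N + 1) / (2 * Nat.floor ((N : ℝ) ^ β) + 1)) * (2 * bandL α N) : ℕ) + 1 : ℝ)
          / (2 * (N : ℝ) + 1)) atTop (nhds 0) := by
      have hv : Tendsto (fun N : ℕ => 2 * ((N : ℝ)) ^ (α - β) + (2 * (N : ℝ) + 1)⁻¹)
          atTop (nhds 0) := by
        have h1 : Tendsto (fun N : ℕ => ((N : ℝ)) ^ (α - β)) atTop (nhds 0) := by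
          have h := (tendsto_rpow_neg_atTop
            (by linarith : (0 : ℝ) < β - α)).comp tendsto_natCast_atTop_atTop
          have hexp : ∀ N : ℕ, ((N : ℝ)) ^ (-(β - α)) = ((N : ℝ)) ^ (α - β) := by
            intro N
            rw [neg_sub]
          simpa [Function.comp_def, hexp] using h
        have h2 : Tendsto (fun N : ℕ => (2 * (N : ℝ) + 1)⁻¹) atTop (nhds 0) := by
          have hatTop : Tendsto (fun N : ℕ => 2 * (N : ℝ) + 1) atTop atTop := by
            apply Filter.tendsto_atTop_add_const_right
            exact Tendsto.const_mul_atTop two_pos tendsto_natCast_atTop_atTop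
          exact tendsto_inv_atTop_zero.comp hatTop
        have := (h1.const_mul (2 : ℝ)).add h2
        simpa using this
      refine tendsto_of_tendsto_of_tendsto_of_le_of_le' tendsto_const_nhds hv ?_ ?_
      · filter_upwards with N
        positivity
      · filter_upwards [Filter.eventually_ge_atTop 1] with N hN1
        have hx1 : (1 : ℝ) ≤ (N : ℝ) := by exact_mod_cast hN1
        have hx0 : (0 : ℝ) < (N : ℝ) := lt_of_lt_of_le one_pos hx1
        have hNb : (1 : ℝ) ≤ ((N : ℝ)) ^ β :=
          Real.one_le_rpow hx1 (le_of_lt hβ0)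
        have hbpos : (0 : ℝ) < ((N : ℝ)) ^ β := lt_of_lt_of_le one_pos hNb
        have hBsge : ((N : ℝ)) ^ β ≤ ((2 * Nat.floor ((N : ℝ) ^ β) + 1 : ℕ) : ℝ) := by
          have hfl := Nat.lt_floor_add_one ((N : ℝ) ^ β)
          push_cast
          linarith
        have hBpos : (0 : ℝ) < ((2 * Nat.floor ((N : ℝ) ^ β) + 1 : ℕ) : ℝ) := by positivity
        have hnpos : (0 : ℝ) < 2 * (N : ℝ) + 1 := by positivity
        have hK : (((2 * N + 1) / (2 * Nat.floor ((N : ℝ) ^ β) + 1) : ℕ) : ℝ)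
            ≤ (2 * (N : ℝ) + 1) / ((N : ℝ)) ^ β := by
          refine le_trans (Nat.cast_div_le) ?_
          push_cast
          exact div_le_div_of_nonneg_left (by positivity) hbpos (by push_cast at hBsge ⊢; linarith)
        have hL : ((2 * bandL α N : ℕ) : ℝ) ≤ 2 * ((N : ℝ)) ^ α := by
          have := Nat.floor_le (Real.rpow_nonneg (le_of_lt hx0) α)
          push_cast [bandL]
          linarith
        have hnum : ((((2 * N + 1) / (2 * Nat.floor ((N : ℝ) ^ β) + 1)) * (2 * bandL α N) : ℕ) : ℝ)
            ≤ ((2 * (N : ℝ) + 1) / ((N : ℝ)) ^ β) * (2 * ((N : ℝ)) ^ α) := by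
          rw [Nat.cast_mul]
          exact mul_le_mul hK hL (by positivity) (by positivity)
        rw [div_le_iff₀ hnpos]
        have hrw : (2 * ((N : ℝ)) ^ (α - β) + (2 * (N : ℝ) + 1)⁻¹) * (2 * (N : ℝ) + 1)
            = ((2 * (N : ℝ) + 1) / ((N : ℝ)) ^ β) * (2 * ((N : ℝ)) ^ α) + 1 := by
          rw [Real.rpow_sub hx0]
          field_simp
        rw [hrw]
        linarith
    have hsqrt : Tendsto b atTop (nhds 0) := by
      rw [hb]
      have h0 : ((z.im ^ 2)⁻¹ : ℝ) * Real.sqrt 0 = 0 := by simp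
      have := ((Real.continuous_sqrt.tendsto 0).comp hu).const_mul ((z.im ^ 2)⁻¹ : ℝ)
      simpa [Real.sqrt_zero] using this
    exact hsqrt.mono_left inf_le_left

end

open MeasureTheory ProbabilityTheory Filter in
/-- For the random band matrix `H_L^N` with `L = ⌊N^α⌋`, assuming the
localization estimate `[H2]` with exponents `μ` and `σ`, and `β` with `αμ < β < 1`,
`α < β`: for every `z ∈ ℂ` with `Im z > 0`,
`(2N+1)⁻¹ 𝔼[Im Tr (H_L^N - z)⁻¹ - Σ_{p=1}^{N_β} Im Tr (H_L^{p,N} - z)⁻¹] → 0` as `N → ∞`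
(along those `N` for which `2⌊N^β⌋+1` divides `2N+1`, so that the `N_β` blocks of size
`2⌊N^β⌋+1` exactly partition `{-N,…,N}`). -/
theorem statement_11
    {Ω : Type*} [MeasurableSpace Ω] (P : Measure Ω) [IsProbabilityMeasure P]
    (α β μ σ : ℝ) (hα0 : 0 ≤ α) (hαμβ : α * μ < β) (hαβ : α < β) (hβ1 : β < 1)
    (X : Ω → ℤ → ℤ → ℝ)
    (hsym : ∀ ω i j, X ω i j = X ω j i)
    (hmeas : ∀ i j, Measurable fun ω => X ω i j)
    (hindep : iIndepFun
      (fun p : {p : ℤ × ℤ // p.1 ≤ p.2} => fun ω => X ω p.1.1 p.1.2) P)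
    (hident : ∀ i j : ℤ, i ≤ j → P.map (fun ω => X ω i j) = P.map (fun ω => X ω 0 0))
    (hmean : ∫ ω, X ω 0 0 ∂P = 0)
    (hvar : ∫ ω, (X ω 0 0) ^ 2 ∂P = 1)
    (hmom : ∀ k : ℕ, Integrable (fun ω => |X ω 0 0| ^ k) P)
    (hloc : ∀ ρ : ℝ, 0 < ρ → ∀ s ∈ Set.Ioo (0 : ℝ) 1,
      ∃ C, 0 < C ∧ ∃ A, 0 < A ∧
        ∀ N : ℕ, 1 ≤ N → ∀ j k : Fin (2 * N + 1), ∀ E ∈ Set.Icc (-ρ) ρ,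
          ∫ ω, |((bandMatrix (X ω) N (bandL α N)
              - E • (1 : Matrix (Fin (2 * N + 1)) (Fin (2 * N + 1)) ℝ))⁻¹) j k| ^ s ∂P
            ≤ C * (N : ℝ) ^ (s * α * σ)
              * Real.exp (-A * |((idx N j : ℝ)) - ((idx N k : ℝ))| / (N : ℝ) ^ (α * μ)))
    (z : ℂ) (hz : 0 < z.im) :
    Tendsto
      (fun N : ℕ =>
        (2 * (N : ℝ) + 1)⁻¹ *
          ∫ ω, (imTrResolvent (bandMatrix (X ω) N (bandL α N)) z
            - ∑ p ∈ Finset.range ((2 * N + 1) / (2 * Nat.floor ((N : ℝ) ^ β) + 1)),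
                imTrResolvent
                  (blockSub N (2 * Nat.floor ((N : ℝ) ^ β) + 1) p
                    (bandMatrix (X ω) N (bandL α N))) z) ∂P)
      (atTop ⊓ 𝓟 {N : ℕ | (2 * Nat.floor ((N : ℝ) ^ β) + 1) ∣ (2 * N + 1)})
      (nhds 0) :=
  statement_11_aux P α β hα0 hαβ X hsym hmeas hident hvar hmom z hz
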